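/- If f : V₁ → W₁ and g : V₂ → W₂ are linear maps between vector spaces over a field k, then the kernel of f ⊗ g : V₁ ⊗ V₂ → W₁ ⊗ W₂ equals ker(f) ⊗ V₂ + V₁ ⊗ ker(g) as a subspace of V₁ ⊗ V₂. -/

import Mathlib

open TensorProduct

open LinearMap in
lemma range_rTensor_subtype_eq (k : Type*) [Field k]
    (V₁ V₂ : Type*) [AddCommGroup V₁] [AddCommGroup V₂] [Module k V₁] [Module k V₂]
    (S : Submodule k V₁) :
    LinearMap.range (rTensor V₂ S.subtype) = Submodule.map₂ (TensorProduct.mk k V₁ V₂) S ⊤ := by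
  rw [rTensor, range_map_eq_span_tmul, Submodule.map₂_eq_span_image2]
  congr 1
  ext t
  constructor
  · rintro ⟨m, n, rfl⟩
    exact ⟨m, m.2, n, trivial, rfl⟩
  · rintro ⟨m, hm, n, -, rfl⟩
    exact ⟨⟨m, hm⟩, n, rfl⟩

open LinearMap in
lemma range_lTensor_subtype_eq (k : Type*) [Field k]
    (V₁ V₂ : Type*) [AddCommGroup V₁] [AddCommGroup V₂] [Module k V₁] [Module k V₂]
    (S : Submodule k V₂) :
    LinearMap.range (lTensor V₁ S.subtype) = Submodule.map₂ (TensorProduct.mk k V₁ V₂) ⊤ S := by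
  rw [lTensor, range_map_eq_span_tmul, Submodule.map₂_eq_span_image2]
  congr 1
  ext t
  constructor
  · rintro ⟨m, n, rfl⟩
    exact ⟨m, trivial, n, n.2, rfl⟩
  · rintro ⟨m, -, n, hn, rfl⟩
    exact ⟨m, ⟨n, hn⟩, rfl⟩

/-- If `f : V₁ → W₁` and `g : V₂ → W₂` are linear maps between vector spaces over a field `k`,
then `ker (f ⊗ g) = ker f ⊗ V₂ + V₁ ⊗ ker g` as subspaces of `V₁ ⊗ V₂`. -/
theorem ker_tensor_map_eq (k : Type*) [Field k]
    (V₁ V₂ W₁ W₂ : Type*) [AddCommGroup V₁] [AddCommGroup V₂] [AddCommGroup W₁] [AddCommGroup W₂]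
    [Module k V₁] [Module k V₂] [Module k W₁] [Module k W₂]
    (f : V₁ →ₗ[k] W₁) (g : V₂ →ₗ[k] W₂) :
    LinearMap.ker (TensorProduct.map f g) =
      Submodule.map₂ (TensorProduct.mk k V₁ V₂) (LinearMap.ker f) ⊤ ⊔
        Submodule.map₂ (TensorProduct.mk k V₁ V₂) ⊤ (LinearMap.ker g) := by
  have hf : f = (LinearMap.range f).subtype ∘ₗ f.rangeRestrict := by
    ext x; rfl
  have hg : g = (LinearMap.range g).subtype ∘ₗ g.rangeRestrict := by
    ext x; rfl
  have hcomp : TensorProduct.map f g =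
      (TensorProduct.map (LinearMap.range f).subtype (LinearMap.range g).subtype) ∘ₗ
        TensorProduct.map f.rangeRestrict g.rangeRestrict := by
    rw [← TensorProduct.map_comp, ← hf, ← hg]
  have hinj : Function.Injective
      (TensorProduct.map (LinearMap.range f).subtype (LinearMap.range g).subtype) := by
    rw [← LinearMap.lTensor_comp_rTensor]
    exact (Module.Flat.lTensor_preserves_injective_linearMap _
        (Submodule.injective_subtype _)).comp
      (Module.Flat.rTensor_preserves_injective_linearMap _ (Submodule.injective_subtype _))
  have hker : LinearMap.ker (TensorProduct.map f g) =
      LinearMap.ker (TensorProduct.map f.rangeRestrict g.rangeRestrict) := by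
    rw [hcomp, LinearMap.ker_comp, LinearMap.ker_eq_bot.mpr hinj, Submodule.comap_bot]
  rw [hker, TensorProduct.map_ker f.rangeRestrict.exact_subtype_ker_map f.surjective_rangeRestrict
    g.rangeRestrict.exact_subtype_ker_map g.surjective_rangeRestrict,
    LinearMap.ker_rangeRestrict, LinearMap.ker_rangeRestrict,
    range_rTensor_subtype_eq, range_lTensor_subtype_eq, sup_comm]
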